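/- arXiv:2505.07982 — 2 statements merged into one kernel-verified Lean document; each statement's English description precedes it below -/
import Mathlib

section
/- Let x, y ∈ ℝ^c with 𝟙ᵀx = 𝟙ᵀy = 0. Then pretty good state transfer occurs between x and y under M (i.e., there exist γ ∈ ℂ with |γ| = 1 and a sequence of times t_k ∈ ℝ such that U_M(t_k)·x → γ·y as k → ∞) if and only if pretty good state transfer occurs between (x,0) and (y,0) under N. -/
open Matrix

/-- The transition matrix `U_R(t) = exp(i·t·R)` of a real square matrix `R`,
as a complex matrix. -/
noncomputable def U {ι : Type*} [Fintype ι] [DecidableEq ι]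
    (R : Matrix ι ι ℝ) (t : ℝ) : Matrix ι ι ℂ :=
  NormedSpace.exp ((Complex.I * (t : ℂ)) • R.map (Complex.ofReal ·))

attribute [local instance] Matrix.linftyOpNormedRing Matrix.linftyOpNormedAlgebra

lemma exp_mulVec {ι : Type*} [Fintype ι] [DecidableEq ι] (S : Matrix ι ι ℂ) (v : ι → ℂ) :
    NormedSpace.exp S *ᵥ v = ∑' n : ℕ, ((n.factorial : ℂ))⁻¹ • (S ^ n *ᵥ v) := by
  let L : Matrix ι ι ℂ →ₗ[ℂ] (ι → ℂ) :=
    { toFun := fun A => A *ᵥ v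
      map_add' := fun A B => Matrix.add_mulVec A B v
      map_smul' := fun r A => Matrix.smul_mulVec r A v }
  let L' := LinearMap.toContinuousLinearMap L
  have : NormedSpace.exp S *ᵥ v = L' (NormedSpace.exp S) := rfl
  rw [this, NormedSpace.exp_eq_tsum (𝕂 := ℂ), L'.map_tsum (NormedSpace.expSeries_summable' (𝕂 := ℂ) S)]
  simp only [_root_.map_smul]
  rfl

lemma summable_aux {ι : Type*} [Fintype ι] [DecidableEq ι] (S : Matrix ι ι ℂ) (v : ι → ℂ) :
    Summable (fun n : ℕ => ((n.factorial : ℂ))⁻¹ • (S ^ n *ᵥ v)) := by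
  let L : Matrix ι ι ℂ →ₗ[ℂ] (ι → ℂ) :=
    { toFun := fun A => A *ᵥ v
      map_add' := fun A B => Matrix.add_mulVec A B v
      map_smul' := fun r A => Matrix.smul_mulVec r A v }
  let L' := LinearMap.toContinuousLinearMap L
  have := (NormedSpace.expSeries_summable' (𝕂 := ℂ) S).map L' L'.continuous
  convert this using 2 with n
  exact (_root_.map_smul L' _ _).symm

section key
variable {c m : ℕ}
  (M : Matrix (Fin c) (Fin c) ℝ) (μ α : ℝ)
  (w : Fin m → ℝ) (B : Matrix (Fin c) (Fin m) ℝ)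
  (D : Matrix (Fin m) (Fin m) ℝ)
  (N : Matrix (Fin c ⊕ Fin m) (Fin c ⊕ Fin m) ℝ)

-- smul commutes with Sum.elim _ 0
lemma smul_elim (a : ℂ) (b : Fin c → ℂ) :
    a • (Sum.elim b (0 : Fin m → ℂ)) = Sum.elim (a • b) 0 := by
  funext i; cases i <;> simp

lemma key_step1 (hM : M.IsSymm)
    (hμ : M *ᵥ (fun _ => (1 : ℝ)) = μ • fun _ => (1 : ℝ))
    (hB : ∀ i j, B i j = w j)
    (hN : N = Matrix.fromBlocks (α • (1 : Matrix (Fin c) (Fin c) ℝ) + M) B Bᵀ D)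
    (z : Fin c → ℂ) (hz : ∑ i, z i = 0) :
    N.map (Complex.ofReal ·) *ᵥ Sum.elim z 0 =
      Sum.elim ((((α : ℂ) • 1 + M.map (Complex.ofReal ·))) *ᵥ z) 0 ∧
      ∑ i, ((((α : ℂ) • 1 + M.map (Complex.ofReal ·))) *ᵥ z) i = 0 := by
  have hcol : ∀ j, ∑ i, (M i j : ℂ) = (μ : ℂ) := by
    intro j
    have h1 : ∀ i, M i j = M j i := fun i => (congrFun (congrFun hM.eq j) i) ▸ rfl
    have h2 : ∑ i, M j i = μ := by
      have := congrFun hμ j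
      simpa [Matrix.mulVec, dotProduct] using this
    rw [show (∑ i, (M i j : ℂ)) = ((∑ i, M j i : ℝ) : ℂ) by
      push_cast; exact Finset.sum_congr rfl fun i _ => by rw [h1 i], h2]
  constructor
  · rw [hN]
    have hmap : (Matrix.fromBlocks (α • (1 : Matrix (Fin c) (Fin c) ℝ) + M) B Bᵀ D).map
        (Complex.ofReal ·) = Matrix.fromBlocks
          ((α : ℂ) • 1 + M.map (Complex.ofReal ·)) (B.map (Complex.ofReal ·))
          (Bᵀ.map (Complex.ofReal ·)) (D.map (Complex.ofReal ·)) := by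
      have hK : (α • (1 : Matrix (Fin c) (Fin c) ℝ) + M).map (Complex.ofReal ·) =
          (α : ℂ) • 1 + M.map (Complex.ofReal ·) := by
        ext i j
        by_cases h : i = j <;>
          simp [Matrix.one_apply, h, Matrix.add_apply, Matrix.smul_apply, Matrix.map_apply]
      rw [Matrix.fromBlocks_map, hK]
    rw [hmap, Matrix.fromBlocks_mulVec]
    have h0 : (Sum.elim z (0 : Fin m → ℂ)) ∘ Sum.inr = 0 := rfl
    have h1 : (Sum.elim z (0 : Fin m → ℂ)) ∘ Sum.inl = z := rfl
    rw [h0, h1]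
    have hBt : Bᵀ.map (Complex.ofReal ·) *ᵥ z = 0 := by
      funext j
      simp only [Matrix.mulVec, dotProduct, Matrix.map_apply, Matrix.transpose_apply,
        Pi.zero_apply]
      simp only [hB, ← Finset.mul_sum, hz, mul_zero]
    simp [hBt, Matrix.mulVec_zero]
  · have happ : ∀ i, ((((α : ℂ) • 1 + M.map (Complex.ofReal ·))) *ᵥ z) i =
        (α : ℂ) * z i + ∑ j, (M i j : ℂ) * z j := by
      intro i
      simp [Matrix.add_mulVec, Matrix.smul_mulVec, Matrix.one_mulVec, Matrix.mulVec,
        dotProduct, Matrix.map_apply]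
      simp [add_mul, Finset.sum_add_distrib, Matrix.one_apply, ite_mul, mul_ite, mul_zero,
        zero_mul, one_mul, Finset.sum_ite_eq]
    rw [Finset.sum_congr rfl (fun i _ => happ i), Finset.sum_add_distrib, ← Finset.mul_sum, hz,
      mul_zero, zero_add, Finset.sum_comm]
    simp_rw [← Finset.sum_mul, hcol, ← Finset.mul_sum, hz, mul_zero]


lemma key_pow (hM : M.IsSymm)
    (hμ : M *ᵥ (fun _ => (1 : ℝ)) = μ • fun _ => (1 : ℝ))
    (hB : ∀ i j, B i j = w j)
    (hN : N = Matrix.fromBlocks (α • (1 : Matrix (Fin c) (Fin c) ℝ) + M) B Bᵀ D)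
    (n : ℕ) (z : Fin c → ℂ) (hz : ∑ i, z i = 0) :
    (N.map (Complex.ofReal ·)) ^ n *ᵥ Sum.elim z 0 =
      Sum.elim ((((α : ℂ) • 1 + M.map (Complex.ofReal ·))) ^ n *ᵥ z) 0 ∧
      ∑ i, ((((α : ℂ) • 1 + M.map (Complex.ofReal ·))) ^ n *ᵥ z) i = 0 := by
  induction n with
  | zero => simpa [Matrix.one_mulVec] using hz
  | succ n ih =>
    obtain ⟨ih1, ih2⟩ := ih
    have hstep := key_step1 M μ α w B D N hM hμ hB hN
      ((((α : ℂ) • 1 + M.map (Complex.ofReal ·))) ^ n *ᵥ z) ih2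
    constructor
    · rw [pow_succ', ← Matrix.mulVec_mulVec, ih1, hstep.1, pow_succ', Matrix.mulVec_mulVec]
    · rw [pow_succ', ← Matrix.mulVec_mulVec]
      exact hstep.2

lemma key (hM : M.IsSymm)
    (hμ : M *ᵥ (fun _ => (1 : ℝ)) = μ • fun _ => (1 : ℝ))
    (hB : ∀ i j, B i j = w j)
    (hN : N = Matrix.fromBlocks (α • (1 : Matrix (Fin c) (Fin c) ℝ) + M) B Bᵀ D)
    (t : ℝ) (z : Fin c → ℂ) (hz : ∑ i, z i = 0) :
    U N t *ᵥ Sum.elim z 0 =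
      Complex.exp (Complex.I * α * t) • Sum.elim (U M t *ᵥ z) 0 := by
  set K : Matrix (Fin c) (Fin c) ℂ := (α : ℂ) • 1 + M.map (Complex.ofReal ·) with hKdef
  have h1 : ∀ n : ℕ, ((Complex.I * t) • N.map (Complex.ofReal ·)) ^ n *ᵥ Sum.elim z 0
      = Sum.elim (((Complex.I * t) • K) ^ n *ᵥ z) 0 := by
    intro n
    rw [smul_pow, smul_pow, Matrix.smul_mulVec, Matrix.smul_mulVec,
      (key_pow M μ α w B D N hM hμ hB hN n z hz).1, smul_elim]
  have h2 : U N t *ᵥ Sum.elim z 0 =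
      Sum.elim (NormedSpace.exp ((Complex.I * t) • K) *ᵥ z) 0 := by
    rw [U, exp_mulVec, exp_mulVec]
    simp_rw [h1]
    let J : (Fin c → ℂ) →ₗ[ℂ] (Fin c ⊕ Fin m → ℂ) :=
      { toFun := fun b => Sum.elim b 0
        map_add' := by intro a b; funext i; cases i <;> simp
        map_smul' := by intro r a; funext i; cases i <;> simp }
    let J' := LinearMap.toContinuousLinearMap J
    have : Sum.elim (∑' n : ℕ, ((n.factorial : ℂ))⁻¹ • (((Complex.I * t) • K) ^ n *ᵥ z))
        (0 : Fin m → ℂ) = J' (∑' n : ℕ, ((n.factorial : ℂ))⁻¹ • (((Complex.I * t) • K) ^ n *ᵥ z))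
        := rfl
    rw [this, J'.map_tsum (summable_aux _ _)]
    congr 1
    funext n
    rw [_root_.map_smul]
    rfl
  have hcomm : Commute ((Complex.I * α * t) • (1 : Matrix (Fin c) (Fin c) ℂ))
      ((Complex.I * t) • M.map (Complex.ofReal ·)) :=
    ((Commute.one_left _).smul_left _).smul_right _
  have h3 : NormedSpace.exp ((Complex.I * t) • K) =
      Complex.exp (Complex.I * α * t) • NormedSpace.exp
        ((Complex.I * t) • M.map (Complex.ofReal ·)) := by
    have hsplit : (Complex.I * t) • K = (Complex.I * α * t) • (1 : Matrix (Fin c) (Fin c) ℂ)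
        + (Complex.I * t) • M.map (Complex.ofReal ·) := by
      rw [hKdef, smul_add, smul_smul]
      congr 2
      ring
    rw [hsplit, Matrix.exp_add_of_commute _ _ hcomm, Matrix.smul_one_eq_diagonal,
      Matrix.exp_diagonal, Pi.exp_def, ← Complex.exp_eq_exp_ℂ]
    rw [show Matrix.diagonal (fun _ : Fin c => Complex.exp (Complex.I * α * t)) =
      Complex.exp (Complex.I * α * t) • (1 : Matrix (Fin c) (Fin c) ℂ) from
      (Matrix.smul_one_eq_diagonal _).symm, smul_mul_assoc, one_mul]
  rw [h2, h3, Matrix.smul_mulVec, smul_elim, U]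

end key


/-- For `x, y ∈ ℝ^c` with `𝟙ᵀx = 𝟙ᵀy = 0`, pretty good state transfer
occurs between `x` and `y` under `M` iff it occurs between `(x,0)` and `(y,0)`
under `N`. -/
theorem stmt3 (c m : ℕ) (hc : 1 ≤ c)
    (M : Matrix (Fin c) (Fin c) ℝ) (hM : M.IsSymm)
    (μ α : ℝ) (hμ : M *ᵥ (fun _ => (1 : ℝ)) = μ • fun _ => (1 : ℝ))
    (w : Fin m → ℝ)
    (B : Matrix (Fin c) (Fin m) ℝ) (hB : ∀ i j, B i j = w j)
    (D : Matrix (Fin m) (Fin m) ℝ) (hD : D.IsSymm)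
    (N : Matrix (Fin c ⊕ Fin m) (Fin c ⊕ Fin m) ℝ)
    (hN : N = Matrix.fromBlocks (α • (1 : Matrix (Fin c) (Fin c) ℝ) + M) B Bᵀ D)
    (x y : Fin c → ℝ) (hx : ∑ i, x i = 0) (hy : ∑ i, y i = 0) :
    (∃ γ : ℂ, ‖γ‖ = 1 ∧ ∃ t : ℕ → ℝ,
        Filter.Tendsto (fun k => U M (t k) *ᵥ fun i => (x i : ℂ))
          Filter.atTop (nhds (γ • fun i => (y i : ℂ)))) ↔
      (∃ γ : ℂ, ‖γ‖ = 1 ∧ ∃ t : ℕ → ℝ,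
        Filter.Tendsto (fun k => U N (t k) *ᵥ Sum.elim (fun i => (x i : ℂ)) 0)
          Filter.atTop (nhds (γ • Sum.elim (fun i => (y i : ℂ)) 0))) := by
  set x' : Fin c → ℂ := fun i => (x i : ℂ) with hx'
  set y' : Fin c → ℂ := fun i => (y i : ℂ) with hy'
  have hxC : ∑ i, x' i = 0 := by rw [hx']; beta_reduce; exact_mod_cast hx
  have habs : ∀ s : ℝ, ‖Complex.exp (Complex.I * α * s)‖ = 1 := by
    intro s
    rw [show Complex.I * α * s = ((α * s : ℝ) : ℂ) * Complex.I by push_cast; ring,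
      Complex.norm_exp_ofReal_mul_I]
  have hJ : Continuous (fun b : Fin c → ℂ => Sum.elim b (0 : Fin m → ℂ)) := by
    apply continuous_pi
    intro i
    cases i with
    | inl i => exact continuous_apply i
    | inr j => exact continuous_const
  have hP : Continuous (fun v : (Fin c ⊕ Fin m) → ℂ => fun i : Fin c => v (Sum.inl i)) :=
    continuous_pi fun i => continuous_apply _
  constructor
  · rintro ⟨γ, hγ, t, ht⟩
    set e : ℕ → ℂ := fun k => Complex.exp (Complex.I * α * t k) with he'
    have he : ∀ k, e k ∈ Metric.sphere (0 : ℂ) 1 := by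
      intro k
      simp [he', Metric.mem_sphere, Complex.dist_eq, habs]
    obtain ⟨a, ha, φ, hφ, hae⟩ := tendsto_subseq_of_bounded Metric.isBounded_sphere he
    rw [Metric.isClosed_sphere.closure_eq] at ha
    have ha1 : ‖a‖ = 1 := by
      simpa [Metric.mem_sphere, Complex.dist_eq] using ha
    refine ⟨a * γ, by rw [norm_mul, ha1, hγ, one_mul], t ∘ φ, ?_⟩
    have hkey : ∀ k, U N (t (φ k)) *ᵥ Sum.elim x' 0 =
        e (φ k) • Sum.elim (U M (t (φ k)) *ᵥ x') 0 := fun k =>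
      key M μ α w B D N hM hμ hB hN (t (φ k)) x' hxC
    have hUM : Filter.Tendsto (fun k => U M (t (φ k)) *ᵥ x') Filter.atTop (nhds (γ • y')) :=
      ht.comp hφ.tendsto_atTop
    have hsum : Filter.Tendsto (fun k => Sum.elim (U M (t (φ k)) *ᵥ x') (0 : Fin m → ℂ))
        Filter.atTop (nhds (Sum.elim (γ • y') 0)) := (hJ.tendsto _).comp hUM
    have hfin : Filter.Tendsto (fun k => e (φ k) • Sum.elim (U M (t (φ k)) *ᵥ x') (0 : Fin m → ℂ))
        Filter.atTop (nhds (a • Sum.elim (γ • y') 0)) := hae.smul hsum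
    have hlim : a • Sum.elim (γ • y') (0 : Fin m → ℂ) = (a * γ) • Sum.elim y' 0 := by
      rw [smul_elim, smul_elim, smul_smul]
    rw [← hlim]
    exact hfin.congr fun k => (hkey k).symm
  · rintro ⟨γ, hγ, t, ht⟩
    set e : ℕ → ℂ := fun k => Complex.exp (Complex.I * α * t k) with he'
    have he : ∀ k, e k ∈ Metric.sphere (0 : ℂ) 1 := by
      intro k
      simp [he', Metric.mem_sphere, Complex.dist_eq, habs]
    obtain ⟨a, ha, φ, hφ, hae⟩ := tendsto_subseq_of_bounded Metric.isBounded_sphere he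
    rw [Metric.isClosed_sphere.closure_eq] at ha
    have ha1 : ‖a‖ = 1 := by
      simpa [Metric.mem_sphere, Complex.dist_eq] using ha
    have ha0 : a ≠ 0 := by
      intro h
      rw [h] at ha1
      simp at ha1
    have he0 : ∀ k, e k ≠ 0 := fun k => Complex.exp_ne_zero _
    refine ⟨a⁻¹ * γ, by rw [norm_mul, norm_inv, ha1, hγ, inv_one, one_mul], t ∘ φ, ?_⟩
    have hkey : ∀ k, U N (t (φ k)) *ᵥ Sum.elim x' 0 =
        e (φ k) • Sum.elim (U M (t (φ k)) *ᵥ x') 0 := fun k =>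
      key M μ α w B D N hM hμ hB hN (t (φ k)) x' hxC
    have hinv : Filter.Tendsto (fun k => (e (φ k))⁻¹) Filter.atTop (nhds a⁻¹) :=
      hae.inv₀ ha0
    have hUN : Filter.Tendsto (fun k => U N (t (φ k)) *ᵥ Sum.elim x' 0)
        Filter.atTop (nhds (γ • Sum.elim y' 0)) := ht.comp hφ.tendsto_atTop
    have h5 : Filter.Tendsto
        (fun k => (e (φ k))⁻¹ • fun i : Fin c => (U N (t (φ k)) *ᵥ Sum.elim x' 0) (Sum.inl i))
        Filter.atTop (nhds (a⁻¹ • fun i : Fin c => (γ • Sum.elim y' 0) (Sum.inl i))) :=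
      hinv.smul ((hP.tendsto _).comp hUN)
    have heq : ∀ k, ((e (φ k))⁻¹ • fun i : Fin c =>
        (U N (t (φ k)) *ᵥ Sum.elim x' 0) (Sum.inl i)) = U M (t (φ k)) *ᵥ x' := by
      intro k
      rw [hkey k]
      funext i
      simp only [Pi.smul_apply, Sum.elim_inl, smul_eq_mul]
      rw [inv_mul_cancel_left₀ (he0 (φ k))]
    have hlim : (a⁻¹ • fun i : Fin c => (γ • Sum.elim y' (0 : Fin m → ℂ)) (Sum.inl i)) = (a⁻¹ * γ) • y' := by
      funext i
      simp [smul_smul, mul_assoc]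
    rw [← hlim]
    exact h5.congr heq
end

section
/- For every integer k ≥ 5 and every N ∈ ℕ, there exist n > N and a connected simple (unweighted) graph G on n vertices which is not regular, has maximum degree k, and admits pair state transfer at time π/2 relative to the adjacency, Laplacian, and signless Laplacian matrices between the same pair of states: there exist vertices a, b, c, d with a ≠ b, c ≠ d, and {a,b} ≠ {c,d}, such that for each M ∈ { A(G), L(G), Q(G) } there is γ_M ∈ ℂ with |γ_M| = 1 satisfying exp(i·(π/2)·M) · (e_a − e_b) = γ_M · (e_c − e_d). -/
open Matrix

attribute [local instance] Classical.propDecidable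

/-- The standard basis vector `e_v` as a complex vector. -/
def ket {ι : Type*} [DecidableEq ι] (v : ι) : ι → ℂ :=
  fun i => if i = v then 1 else 0

/-- One-sided adjacency relation for our graph family. -/
def Hrel (k a b : ℕ) : Prop :=
  (a = 0 ∧ b = 1) ∨ (a = 1 ∧ b = 2) ∨ (a = 2 ∧ b = 3) ∨ (a = 0 ∧ b = 3) ∨
  (a < 4 ∧ 4 ≤ b ∧ b < k + 2) ∨ (a = 4 ∧ b = k + 2) ∨ (k + 2 ≤ a ∧ b = a + 1)

/-- The graph family. -/
def Gr (k n : ℕ) : SimpleGraph (Fin n) :=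
  SimpleGraph.fromRel (fun a b => Hrel k a.val b.val)

lemma adj_iff {k n : ℕ} (hk : 5 ≤ k) {a b : Fin n} :
    (Gr k n).Adj a b ↔ (Hrel k a.val b.val ∨ Hrel k b.val a.val) := by
  rw [Gr, SimpleGraph.fromRel_adj]
  constructor
  · exact fun h => h.2
  · intro h
    refine ⟨fun e => ?_, h⟩
    subst e
    unfold Hrel at h
    omega

lemma degree_eq {k n : ℕ} (hk : 5 ≤ k) (v : Fin n) :
    (Gr k n).degree v
      = ((Finset.range n).filter (fun m => Hrel k v.val m ∨ Hrel k m v.val)).card := by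
  unfold SimpleGraph.degree
  refine Finset.card_bij (fun x _ => x.val) ?_ ?_ ?_
  · intro x hx
    rw [SimpleGraph.mem_neighborFinset, adj_iff hk] at hx
    simp only [Finset.mem_filter, Finset.mem_range]
    exact ⟨x.isLt, hx⟩
  · intro x _ y _ h
    exact Fin.val_injective h
  · intro m hm
    simp only [Finset.mem_filter, Finset.mem_range] at hm
    exact ⟨⟨m, hm.1⟩, by rw [SimpleGraph.mem_neighborFinset, adj_iff hk]; exact hm.2, rfl⟩

lemma card_aux {n k x y : ℕ} {P : ℕ → Prop} [DecidablePred P] (hk : 5 ≤ k)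
    (hn : k + 2 ≤ n) (hx : x < 4) (hy : y < 4) (hxy : x ≠ y)
    (hiff : ∀ m, P m ↔ (m = x ∨ m = y ∨ (4 ≤ m ∧ m < k + 2))) :
    ((Finset.range n).filter P).card = k := by
  have he : (Finset.range n).filter P = insert x (insert y (Finset.Ico 4 (k + 2))) := by
    ext m
    simp only [Finset.mem_filter, Finset.mem_range, Finset.mem_insert, Finset.mem_Ico, hiff m]
    omega
  rw [he, Finset.card_insert_of_notMem
      (by simp only [Finset.mem_insert, Finset.mem_Ico]; omega),
    Finset.card_insert_of_notMem (by simp only [Finset.mem_Ico]; omega), Nat.card_Ico]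
  omega

lemma card_four {n : ℕ} {P : ℕ → Prop} [DecidablePred P] (hn : 4 ≤ n)
    (hiff : ∀ m, P m ↔ m < 4) :
    ((Finset.range n).filter P).card = 4 := by
  have he : (Finset.range n).filter P = Finset.range 4 := by
    ext m
    simp only [Finset.mem_filter, Finset.mem_range, hiff m]
    omega
  rw [he, Finset.card_range]

lemma card_le4 {n : ℕ} {P : ℕ → Prop} [DecidablePred P] (h : ∀ m, P m → m < 4) :
    ((Finset.range n).filter P).card ≤ 4 := by
  have hsub : (Finset.range n).filter P ⊆ Finset.range 4 := by
    intro m hm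
    simp only [Finset.mem_filter] at hm
    exact Finset.mem_range.mpr (h m hm.2)
  exact (Finset.card_le_card hsub).trans (by rw [Finset.card_range])

lemma card_le5 {n x : ℕ} {P : ℕ → Prop} [DecidablePred P] (h : ∀ m, P m → (m < 4 ∨ m = x)) :
    ((Finset.range n).filter P).card ≤ 5 := by
  have hsub : (Finset.range n).filter P ⊆ insert x (Finset.range 4) := by
    intro m hm
    simp only [Finset.mem_filter] at hm
    simp only [Finset.mem_insert, Finset.mem_range]
    rcases h m hm.2 with h' | h'
    exacts [Or.inr h', Or.inl h']
  refine (Finset.card_le_card hsub).trans ?_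
  refine (Finset.card_insert_le _ _).trans ?_
  rw [Finset.card_range]

lemma card_le3 {n x y z : ℕ} {P : ℕ → Prop} [DecidablePred P]
    (h : ∀ m, P m → (m = x ∨ m = y ∨ m = z)) :
    ((Finset.range n).filter P).card ≤ 3 := by
  have hsub : (Finset.range n).filter P ⊆ insert x (insert y ({z} : Finset ℕ)) := by
    intro m hm
    simp only [Finset.mem_filter] at hm
    simp only [Finset.mem_insert, Finset.mem_singleton]
    exact h m hm.2
  refine (Finset.card_le_card hsub).trans ?_
  refine (Finset.card_insert_le _ _).trans ?_
  have := Finset.card_insert_le y ({z} : Finset ℕ)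
  simp only [Finset.card_singleton] at this
  omega

lemma deg_cycle {k n : ℕ} (hk : 5 ≤ k) (hn : k + 2 ≤ n) (v : Fin n) (hv : v.val < 4) :
    (Gr k n).degree v = k := by
  rw [degree_eq hk]
  rcases (by omega : v.val = 0 ∨ v.val = 1 ∨ v.val = 2 ∨ v.val = 3) with h | h | h | h
  · exact card_aux hk hn (by norm_num) (by norm_num) (by norm_num)
      (fun m => by rw [h]; unfold Hrel; omega :
        ∀ m, (Hrel k v.val m ∨ Hrel k m v.val) ↔ (m = 1 ∨ m = 3 ∨ (4 ≤ m ∧ m < k + 2)))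
  · exact card_aux hk hn (by norm_num) (by norm_num) (by norm_num)
      (fun m => by rw [h]; unfold Hrel; omega :
        ∀ m, (Hrel k v.val m ∨ Hrel k m v.val) ↔ (m = 0 ∨ m = 2 ∨ (4 ≤ m ∧ m < k + 2)))
  · exact card_aux hk hn (by norm_num) (by norm_num) (by norm_num)
      (fun m => by rw [h]; unfold Hrel; omega :
        ∀ m, (Hrel k v.val m ∨ Hrel k m v.val) ↔ (m = 1 ∨ m = 3 ∨ (4 ≤ m ∧ m < k + 2)))
  · exact card_aux hk hn (by norm_num) (by norm_num) (by norm_num)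
      (fun m => by rw [h]; unfold Hrel; omega :
        ∀ m, (Hrel k v.val m ∨ Hrel k m v.val) ↔ (m = 0 ∨ m = 2 ∨ (4 ≤ m ∧ m < k + 2)))

lemma deg_five {k n : ℕ} (hk : 5 ≤ k) (hn : k + 3 ≤ n) (v : Fin n) (hv : v.val = 5) :
    (Gr k n).degree v = 4 := by
  rw [degree_eq hk]
  exact card_four (by omega) (fun m => by rw [hv]; unfold Hrel; omega)

lemma deg_le {k n : ℕ} (hk : 5 ≤ k) (hn : k + 2 ≤ n) (v : Fin n) :
    (Gr k n).degree v ≤ k := by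
  by_cases hv : v.val < 4
  · exact le_of_eq (deg_cycle hk hn v hv)
  push_neg at hv
  rw [degree_eq hk]
  by_cases h4 : v.val = 4
  · refine (card_le5 (x := k + 2) ?_).trans (by omega)
    intro m hm
    rw [h4] at hm
    unfold Hrel at hm
    omega
  by_cases h5 : v.val < k + 2
  · refine (card_le4 ?_).trans (by omega)
    intro m hm
    unfold Hrel at hm
    omega
  · refine (card_le3 (x := v.val + 1) (y := 4) (z := v.val - 1) ?_).trans (by omega)
    intro m hm
    unfold Hrel at hm
    omega

lemma gr_connected {k n : ℕ} (hk : 5 ≤ k) (hn : k + 3 ≤ n) : (Gr k n).Connected := by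
  have h0 : 0 < n := by omega
  rw [SimpleGraph.connected_iff]
  refine ⟨?_, ⟨⟨0, h0⟩⟩⟩
  have reach : ∀ m (hm : m < n), (Gr k n).Reachable ⟨0, h0⟩ ⟨m, hm⟩ := by
    intro m
    induction m using Nat.strong_induction_on with
    | _ m ih =>
      intro hm
      rcases (by omega : m = 0 ∨ m = 1 ∨ m = 2 ∨ m = 3 ∨ (4 ≤ m ∧ m < k + 2) ∨ m = k + 2
          ∨ k + 2 < m) with h | h | h | h | h | h | h
      · subst h; exact SimpleGraph.Reachable.refl _
      · refine SimpleGraph.Adj.reachable ?_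
        rw [adj_iff hk]
        exact Or.inl (by show Hrel k 0 m; unfold Hrel; omega)
      · refine (ih 1 (by omega) (by omega)).trans (SimpleGraph.Adj.reachable ?_)
        rw [adj_iff hk]
        exact Or.inl (by show Hrel k 1 m; unfold Hrel; omega)
      · refine SimpleGraph.Adj.reachable ?_
        rw [adj_iff hk]
        exact Or.inl (by show Hrel k 0 m; unfold Hrel; omega)
      · refine SimpleGraph.Adj.reachable ?_
        rw [adj_iff hk]
        exact Or.inl (by show Hrel k 0 m; unfold Hrel; omega)
      · refine (ih 4 (by omega) (by omega)).trans (SimpleGraph.Adj.reachable ?_)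
        rw [adj_iff hk]
        exact Or.inl (by show Hrel k 4 m; unfold Hrel; omega)
      · refine (ih (m - 1) (by omega) (by omega)).trans (SimpleGraph.Adj.reachable ?_)
        rw [adj_iff hk]
        exact Or.inl (by show Hrel k (m - 1) m; unfold Hrel; omega)
  intro x y
  exact (reach x.val x.isLt).symm.trans (reach y.val y.isLt)

lemma exp_mulVec_eigen {ι : Type*} [Fintype ι] [DecidableEq ι]
    (B : Matrix ι ι ℂ) (v : ι → ℂ) (μ : ℂ) (h : B *ᵥ v = μ • v) :
    NormedSpace.exp B *ᵥ v = Complex.exp μ • v := by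
  letI : SeminormedRing (Matrix ι ι ℂ) := Matrix.linftyOpSemiNormedRing
  letI : NormedRing (Matrix ι ι ℂ) := Matrix.linftyOpNormedRing
  letI : NormedAlgebra ℂ (Matrix ι ι ℂ) := Matrix.linftyOpNormedAlgebra
  have hpow : ∀ p : ℕ, B ^ p *ᵥ v = μ ^ p • v := by
    intro p
    induction p with
    | zero => simp
    | succ p ih =>
        rw [pow_succ, pow_succ, ← Matrix.mulVec_mulVec, h, Matrix.mulVec_smul, ih,
          smul_smul, mul_comm]
  let f : Matrix ι ι ℂ →ₗ[ℂ] (ι → ℂ) :=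
    { toFun := fun M => M *ᵥ v
      map_add' := fun A B => Matrix.add_mulVec A B v
      map_smul' := fun c A => Matrix.smul_mulVec c A v }
  have hcont : Continuous f := LinearMap.continuous_of_finiteDimensional f
  have hs : HasSum (fun p : ℕ => ((p.factorial : ℂ)⁻¹ : ℂ) • B ^ p) (NormedSpace.exp B) :=
    NormedSpace.exp_series_hasSum_exp' B
  have hs2 : HasSum (fun p : ℕ => f (((p.factorial : ℂ)⁻¹ : ℂ) • B ^ p))
      (f (NormedSpace.exp B)) := hs.map f.toAddMonoidHom hcont
  have hs3 : HasSum (fun p : ℕ => ((p.factorial : ℂ)⁻¹ * μ ^ p) • v)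
      (f (NormedSpace.exp B)) := by
    convert hs2 using 2 with p
    rw [_root_.map_smul]
    show _ = ((p.factorial : ℂ)⁻¹ : ℂ) • (B ^ p *ᵥ v)
    rw [hpow p, smul_smul]
  have hμ : HasSum (fun p : ℕ => ((p.factorial : ℂ)⁻¹ * μ ^ p) • v)
      (Complex.exp μ • v) := by
    have : HasSum (fun p : ℕ => ((p.factorial : ℂ)⁻¹ : ℂ) • μ ^ p) (NormedSpace.exp μ) :=
      NormedSpace.exp_series_hasSum_exp' μ
    rw [Complex.exp_eq_exp_ℂ]
    simpa [smul_eq_mul] using this.smul_const v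
  exact hs3.unique hμ ▸ rfl

lemma pst {ι : Type*} [Fintype ι] [DecidableEq ι] (R : Matrix ι ι ℝ) (u w : ι → ℂ)
    (μp μm : ℝ)
    (hp : R.map (Complex.ofReal ·) *ᵥ (u + w) = ((μp : ℂ)) • (u + w))
    (hm : R.map (Complex.ofReal ·) *ᵥ (u - w) = ((μm : ℂ)) • (u - w))
    (hgap : μp - μm = 2 ∨ μp - μm = -2) :
    ∃ γ : ℂ, ‖γ‖ = 1 ∧ U R (Real.pi / 2) *ᵥ u = γ • w := by
  set c : ℂ := Complex.I * ((Real.pi / 2 : ℝ) : ℂ) with hc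
  set B : Matrix ι ι ℂ := c • R.map (Complex.ofReal ·) with hB
  have h1 : B *ᵥ (u + w) = (c * μp) • (u + w) := by
    rw [hB, Matrix.smul_mulVec, hp, smul_smul]
  have h2 : B *ᵥ (u - w) = (c * μm) • (u - w) := by
    rw [hB, Matrix.smul_mulVec, hm, smul_smul]
  have e1 := exp_mulVec_eigen B (u + w) _ h1
  have e2 := exp_mulVec_eigen B (u - w) _ h2
  have key : Complex.exp (c * μm) = - Complex.exp (c * μp) := by
    have hsplit : Complex.exp (c * μm)
        = Complex.exp (c * μp) * Complex.exp (c * (μm - μp)) := by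
      rw [← Complex.exp_add]; ring_nf
    have hval : Complex.exp (c * (μm - μp)) = -1 := by
      rcases hgap with hg | hg
      · have : ((μm : ℂ) - μp) = -2 := by
          have : (μm : ℝ) - μp = -2 := by linarith
          exact_mod_cast congrArg (Complex.ofReal ·) this
        rw [hc]
        push_cast [this]
        rw [show Complex.I * (↑Real.pi / 2) * -2 = -(Real.pi * Complex.I) by ring,
          Complex.exp_neg, Complex.exp_pi_mul_I]
        norm_num
      · have : ((μm : ℂ) - μp) = 2 := by
          have : (μm : ℝ) - μp = 2 := by linarith
          exact_mod_cast congrArg (Complex.ofReal ·) this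
        rw [hc]
        push_cast [this]
        rw [show Complex.I * (↑Real.pi / 2) * 2 = Real.pi * Complex.I by ring,
          Complex.exp_pi_mul_I]
    rw [hsplit, hval]; ring
  refine ⟨Complex.exp (c * μp), ?_, ?_⟩
  · rw [Complex.norm_exp]
    have : (c * μp).re = 0 := by
      rw [hc]; simp [Complex.mul_re]
    rw [this, Real.exp_zero]
  · have hU : U R (Real.pi / 2) = NormedSpace.exp B := by rw [U, hB, hc]
    have hu : u = (2⁻¹ : ℂ) • ((u + w) + (u - w)) := by
      funext i; simp only [Pi.smul_apply, Pi.add_apply, Pi.sub_apply, smul_eq_mul]; ring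
    rw [hU, hu, Matrix.mulVec_smul, Matrix.mulVec_add, e1, e2, key]
    funext i
    simp only [Pi.smul_apply, Pi.add_apply, Pi.sub_apply, Pi.neg_apply, smul_eq_mul, neg_mul]
    ring

lemma mulVec_ket {ι : Type*} [Fintype ι] [DecidableEq ι] (M : Matrix ι ι ℂ) (p : ι) :
    M *ᵥ ket p = fun i => M i p := by
  funext i
  simp [Matrix.mulVec, dotProduct, ket, mul_ite]

lemma ket_apply_mk {n K : ℕ} (hK : K < n) (i : Fin n) :
    ket (⟨K, hK⟩ : Fin n) i = if i.val = K then (1 : ℂ) else 0 := by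
  unfold ket
  exact if_congr ⟨fun e => congrArg Fin.val e, fun e => Fin.ext e⟩ rfl rfl

lemma adjE {k n : ℕ} (i j : Fin n) :
    (((Gr k n).adjMatrix ℝ).map (Complex.ofReal ·)) i j
      = if (Gr k n).Adj i j then 1 else 0 := by
  simp [Matrix.map_apply, SimpleGraph.adjMatrix_apply, apply_ite (Complex.ofReal ·)]

set_option maxHeartbeats 1600000 in
lemma twin02 {k n : ℕ} (hk : 5 ≤ k) (hn : k + 3 ≤ n) (i : Fin n) :
    (Gr k n).Adj i ⟨0, by omega⟩ ↔ (Gr k n).Adj i ⟨2, by omega⟩ := by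
  rw [adj_iff hk, adj_iff hk]
  show (Hrel k i.val 0 ∨ Hrel k 0 i.val) ↔ (Hrel k i.val 2 ∨ Hrel k 2 i.val)
  unfold Hrel
  omega

set_option maxHeartbeats 1600000 in
lemma twin13 {k n : ℕ} (hk : 5 ≤ k) (hn : k + 3 ≤ n) (i : Fin n) :
    (Gr k n).Adj i ⟨1, by omega⟩ ↔ (Gr k n).Adj i ⟨3, by omega⟩ := by
  rw [adj_iff hk, adj_iff hk]
  show (Hrel k i.val 1 ∨ Hrel k 1 i.val) ↔ (Hrel k i.val 3 ∨ Hrel k 3 i.val)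
  unfold Hrel
  omega

set_option maxHeartbeats 1600000 in
lemma char0 {k n : ℕ} (hk : 5 ≤ k) (hn : k + 3 ≤ n) (i : Fin n) :
    (Gr k n).Adj i ⟨0, by omega⟩
      ↔ (i.val = 1 ∨ i.val = 3 ∨ (4 ≤ i.val ∧ i.val < k + 2)) := by
  rw [adj_iff hk]
  show (Hrel k i.val 0 ∨ Hrel k 0 i.val) ↔ _
  unfold Hrel
  omega

set_option maxHeartbeats 1600000 in
lemma char1 {k n : ℕ} (hk : 5 ≤ k) (hn : k + 3 ≤ n) (i : Fin n) :
    (Gr k n).Adj i ⟨1, by omega⟩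
      ↔ (i.val = 0 ∨ i.val = 2 ∨ (4 ≤ i.val ∧ i.val < k + 2)) := by
  rw [adj_iff hk]
  show (Hrel k i.val 1 ∨ Hrel k 1 i.val) ↔ _
  unfold Hrel
  omega

section Eigen

variable {k n : ℕ}

lemma eigA_plus (hk : 5 ≤ k) (hn : k + 3 ≤ n) :
    (((Gr k n).adjMatrix ℝ).map (Complex.ofReal ·)) *ᵥ
        ((ket (⟨0, by omega⟩ : Fin n) - ket ⟨1, by omega⟩)
          + (ket ⟨3, by omega⟩ - ket ⟨2, by omega⟩))
      = (((0 : ℝ) : ℂ)) • ((ket (⟨0, by omega⟩ : Fin n) - ket ⟨1, by omega⟩)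
          + (ket ⟨3, by omega⟩ - ket ⟨2, by omega⟩)) := by
  rw [Matrix.mulVec_add, Matrix.mulVec_sub, Matrix.mulVec_sub, mulVec_ket, mulVec_ket,
    mulVec_ket, mulVec_ket]
  funext i
  have e2 : (((Gr k n).adjMatrix ℝ).map (Complex.ofReal ·)) i ⟨2, by omega⟩
      = (((Gr k n).adjMatrix ℝ).map (Complex.ofReal ·)) i ⟨0, by omega⟩ := by
    rw [adjE, adjE]
    exact if_congr (twin02 hk hn i).symm rfl rfl
  have e3 : (((Gr k n).adjMatrix ℝ).map (Complex.ofReal ·)) i ⟨3, by omega⟩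
      = (((Gr k n).adjMatrix ℝ).map (Complex.ofReal ·)) i ⟨1, by omega⟩ := by
    rw [adjE, adjE]
    exact if_congr (twin13 hk hn i).symm rfl rfl
  simp only [Pi.add_apply, Pi.sub_apply, Pi.smul_apply, smul_eq_mul]
  rw [e2, e3]
  push_cast
  ring

set_option maxHeartbeats 1600000 in
lemma eigA_minus (hk : 5 ≤ k) (hn : k + 3 ≤ n) :
    (((Gr k n).adjMatrix ℝ).map (Complex.ofReal ·)) *ᵥ
        ((ket (⟨0, by omega⟩ : Fin n) - ket ⟨1, by omega⟩)
          - (ket ⟨3, by omega⟩ - ket ⟨2, by omega⟩))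
      = (((-2 : ℝ) : ℂ)) • ((ket (⟨0, by omega⟩ : Fin n) - ket ⟨1, by omega⟩)
          - (ket ⟨3, by omega⟩ - ket ⟨2, by omega⟩)) := by
  rw [Matrix.mulVec_sub, Matrix.mulVec_sub, Matrix.mulVec_sub, mulVec_ket, mulVec_ket,
    mulVec_ket, mulVec_ket]
  funext i
  have e2 : (((Gr k n).adjMatrix ℝ).map (Complex.ofReal ·)) i ⟨2, by omega⟩
      = (((Gr k n).adjMatrix ℝ).map (Complex.ofReal ·)) i ⟨0, by omega⟩ := by
    rw [adjE, adjE]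
    exact if_congr (twin02 hk hn i).symm rfl rfl
  have e3 : (((Gr k n).adjMatrix ℝ).map (Complex.ofReal ·)) i ⟨3, by omega⟩
      = (((Gr k n).adjMatrix ℝ).map (Complex.ofReal ·)) i ⟨1, by omega⟩ := by
    rw [adjE, adjE]
    exact if_congr (twin13 hk hn i).symm rfl rfl
  have f0 : (((Gr k n).adjMatrix ℝ).map (Complex.ofReal ·)) i ⟨0, by omega⟩
      = if (i.val = 1 ∨ i.val = 3 ∨ (4 ≤ i.val ∧ i.val < k + 2)) then (1 : ℂ) else 0 := by
    rw [adjE]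
    exact if_congr (char0 hk hn i) rfl rfl
  have f1 : (((Gr k n).adjMatrix ℝ).map (Complex.ofReal ·)) i ⟨1, by omega⟩
      = if (i.val = 0 ∨ i.val = 2 ∨ (4 ≤ i.val ∧ i.val < k + 2)) then (1 : ℂ) else 0 := by
    rw [adjE]
    exact if_congr (char1 hk hn i) rfl rfl
  simp only [Pi.sub_apply, Pi.smul_apply, smul_eq_mul]
  rw [e2, e3, f0, f1]
  simp only [ket_apply_mk]
  push_cast
  split_ifs <;> first | (exfalso; omega) | norm_num

lemma eigD (hk : 5 ≤ k) (hn : k + 3 ≤ n) (x : Fin n → ℂ)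
    (hx : ∀ i : Fin n, 4 ≤ i.val → x i = 0) :
    (((Gr k n).degMatrix ℝ).map (Complex.ofReal ·)) *ᵥ x = (((k : ℝ) : ℂ)) • x := by
  have hD : (((Gr k n).degMatrix ℝ).map (Complex.ofReal ·))
      = Matrix.diagonal (fun v => (((Gr k n).degree v : ℝ) : ℂ)) := by
    rw [SimpleGraph.degMatrix]
    exact Matrix.diagonal_map (by simp)
  rw [hD]
  funext i
  rw [Matrix.mulVec_diagonal]
  simp only [Pi.smul_apply, smul_eq_mul]
  by_cases hi : i.val < 4
  · rw [deg_cycle hk (by omega) i hi]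
  · rw [hx i (by omega), mul_zero, mul_zero]

end Eigen

/-- For every `k ≥ 5` there are infinitely many (i.e., arbitrarily
large) connected non-regular simple graphs with maximum degree `k` admitting pair
state transfer at time `π/2` relative to each of `A`, `L`, and `Q` between the same
pair of states. -/
theorem stmt18 :
    ∀ k : ℕ, 5 ≤ k → ∀ N : ℕ, ∃ n : ℕ, N < n ∧
      ∃ G : SimpleGraph (Fin n),
        G.Connected ∧
        (¬ ∃ d : ℕ, G.IsRegularOfDegree d) ∧
        G.maxDegree = k ∧
        ∃ a b c d : Fin n, a ≠ b ∧ c ≠ d ∧ ({a, b} : Set (Fin n)) ≠ {c, d} ∧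
          ∀ M ∈ ({G.adjMatrix ℝ, G.lapMatrix ℝ, G.degMatrix ℝ + G.adjMatrix ℝ} :
              Set (Matrix (Fin n) (Fin n) ℝ)),
            ∃ γ : ℂ, ‖γ‖ = 1 ∧
              U M (Real.pi / 2) *ᵥ (ket a - ket b) = γ • (ket c - ket d) := by
  intro k hk N
  refine ⟨N + k + 3, by omega, Gr k (N + k + 3), ?_, ?_, ?_, ?_⟩
  · exact gr_connected hk (by omega)
  · rintro ⟨d, hd⟩
    have h1 := hd ⟨0, by omega⟩
    have h2 := hd ⟨5, by omega⟩
    have e1 := deg_cycle hk (n := N + k + 3) (by omega) ⟨0, by omega⟩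
      (show (0 : ℕ) < 4 by norm_num)
    have e2 := deg_five hk (n := N + k + 3) (by omega) ⟨5, by omega⟩ rfl
    omega
  · refine le_antisymm
      (SimpleGraph.maxDegree_le_of_forall_degree_le _ _ (fun v => deg_le hk (by omega) v)) ?_
    have h1 := SimpleGraph.degree_le_maxDegree (Gr k (N + k + 3)) ⟨0, by omega⟩
    rwa [deg_cycle hk (by omega) ⟨0, by omega⟩ (show (0 : ℕ) < 4 by norm_num)] at h1
  set n := N + k + 3 with hn
  have hn3 : k + 3 ≤ n := by omega
  refine ⟨⟨0, by omega⟩, ⟨1, by omega⟩, ⟨3, by omega⟩, ⟨2, by omega⟩, ?_, ?_, ?_, ?_⟩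
  · exact Fin.ne_of_val_ne (by norm_num)
  · exact Fin.ne_of_val_ne (by norm_num)
  · intro h
    have h0 : (⟨0, by omega⟩ : Fin n) ∈ ({⟨3, by omega⟩, ⟨2, by omega⟩} : Set (Fin n)) :=
      h ▸ Set.mem_insert _ _
    simp only [Set.mem_insert_iff, Set.mem_singleton_iff, Fin.mk.injEq] at h0
    omega
  intro M hM
  have hxplus : ∀ i : Fin n, 4 ≤ i.val →
      ((ket (⟨0, by omega⟩ : Fin n) - ket (⟨1, by omega⟩ : Fin n))
        + (ket (⟨3, by omega⟩ : Fin n) - ket (⟨2, by omega⟩ : Fin n))) i = 0 := by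
    intro i hi
    simp only [Pi.add_apply, Pi.sub_apply, ket_apply_mk]
    rw [if_neg (by omega), if_neg (by omega), if_neg (by omega), if_neg (by omega)]
    ring
  have hxminus : ∀ i : Fin n, 4 ≤ i.val →
      ((ket (⟨0, by omega⟩ : Fin n) - ket (⟨1, by omega⟩ : Fin n))
        - (ket (⟨3, by omega⟩ : Fin n) - ket (⟨2, by omega⟩ : Fin n))) i = 0 := by
    intro i hi
    simp only [Pi.sub_apply, ket_apply_mk]
    rw [if_neg (by omega), if_neg (by omega), if_neg (by omega), if_neg (by omega)]
    ring
  have hDp := eigD hk hn3 _ hxplus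
  have hDm := eigD hk hn3 _ hxminus
  have hAp := eigA_plus hk hn3
  have hAm := eigA_minus hk hn3
  have hofsub : ∀ a b : ℝ, Complex.ofReal (a - b) = Complex.ofReal a - Complex.ofReal b :=
    fun a b => Complex.ofReal_sub a b
  have hofadd : ∀ a b : ℝ, Complex.ofReal (a + b) = Complex.ofReal a + Complex.ofReal b :=
    fun a b => Complex.ofReal_add a b
  simp only [Set.mem_insert_iff, Set.mem_singleton_iff] at hM
  rcases hM with rfl | rfl | rfl
  · exact pst _ _ _ (0 : ℝ) (-2 : ℝ) hAp hAm (Or.inl (by norm_num))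
  · refine pst _ _ _ ((k : ℝ)) ((k : ℝ) + 2) ?_ ?_ (Or.inr (by ring))
    · rw [SimpleGraph.lapMatrix, Matrix.map_sub _ hofsub, Matrix.sub_mulVec, hDp, hAp]
      funext i
      simp only [Pi.sub_apply, Pi.smul_apply, smul_eq_mul]
      push_cast
      ring
    · rw [SimpleGraph.lapMatrix, Matrix.map_sub _ hofsub, Matrix.sub_mulVec, hDm, hAm]
      funext i
      simp only [Pi.sub_apply, Pi.smul_apply, smul_eq_mul]
      push_cast
      ring
  · refine pst _ _ _ ((k : ℝ)) ((k : ℝ) - 2) ?_ ?_ (Or.inl (by ring))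
    · rw [Matrix.map_add _ hofadd, Matrix.add_mulVec, hDp, hAp]
      funext i
      simp only [Pi.add_apply, Pi.sub_apply, Pi.smul_apply, smul_eq_mul]
      push_cast
      ring
    · rw [Matrix.map_add _ hofadd, Matrix.add_mulVec, hDm, hAm]
      funext i
      simp only [Pi.add_apply, Pi.sub_apply, Pi.smul_apply, smul_eq_mul]
      push_cast
      ring
end
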